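/- In the free partially commutative left regular band B(Γ) presented by a graph Γ = (V, E) with relations xy = yx for {x,y} ∈ E, two distinct generators x, y ∈ V commute in B(Γ) if and only if {x,y} ∈ E. (Equivalently, via the normal form: words v, w over V with no repeated letters represent the same element of B(Γ) iff they have the same letter set and induce the same acyclic orientation of the complement graph.) -/

import Mathlib

/-- One step of the commutation rewriting: swap two adjacent letters that are
joined by an edge of `Γ`. The congruence on the free left regular band
generated by the relations `xy = yx` for edges `{x,y}` restricts, on
duplicate-free words, to the equivalence generated by this relation. -/
def commStep {V : Type*} (G : SimpleGraph V) (u v : List V) : Prop :=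
  ∃ (p s : List V) (x y : V), G.Adj x y ∧
    u = p ++ [x, y] ++ s ∧ v = p ++ [y, x] ++ s

/-- The acyclic-orientation data of a duplicate-free word `w`: `x → y` iff `x`
precedes `y` in `w` and `{x,y}` is not an edge of `Γ`. -/
def wordOrientation {V : Type*} (G : SimpleGraph V) (w : List V) (x y : V) :
    Prop :=
  [x, y].Sublist w ∧ ¬ G.Adj x y

section Aux

variable {V : Type*} {G : SimpleGraph V}

private lemma pair_swap {a b x y : V} {p s : List V}
    (h : [a, b].Sublist (p ++ x :: y :: s)) :
    (a = x ∧ b = y) ∨ [a, b].Sublist (p ++ y :: x :: s) := by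
  rw [List.sublist_append_iff] at h
  obtain ⟨l1, l2, heq, h1, h2⟩ := h
  cases l1 with
  | nil =>
    simp only [List.nil_append] at heq
    subst heq
    -- [a,b] <+ x :: y :: s
    cases h2 with
    | cons _ h2 =>
      -- [a,b] <+ y :: s
      cases h2 with
      | cons _ h2 =>
        right
        exact ((h2.cons _).cons _).trans (List.sublist_append_right p _)
      | cons_cons _ h2 =>
        -- a = y, [b] <+ s
        right
        exact ((h2.cons _).cons₂ _).trans (List.sublist_append_right p _)
    | cons_cons _ h2 =>
      -- a = x, [b] <+ y :: s
      cases h2 with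
      | cons _ h2 =>
        right
        exact ((h2.cons₂ _).cons _).trans (List.sublist_append_right p _)
      | cons_cons _ h2 =>
        left; exact ⟨rfl, rfl⟩
  | cons c l1 =>
    cases l1 with
    | nil =>
      injection heq with e1 e2
      subst e1; subst e2
      right
      rw [List.sublist_append_iff]
      refine ⟨[a], [b], rfl, h1, ?_⟩
      rw [List.singleton_sublist] at h2 ⊢
      simp only [List.mem_cons] at h2 ⊢
      tauto
    | cons d l1 =>
      injection heq with e1 e2
      injection e2 with e2 e3
      subst e1; subst e2
      obtain ⟨rfl, rfl⟩ := List.append_eq_nil_iff.mp e3.symm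
      right
      exact h1.trans (List.sublist_append_left p _)

private lemma step_invariant [DecidableEq V] {u v : List V}
    (h : commStep G u v) :
    u.toFinset = v.toFinset ∧
      ∀ x y : V, wordOrientation G u x y ↔ wordOrientation G v x y := by
  obtain ⟨p, s, x, y, hadj, rfl, rfl⟩ := h
  constructor
  · ext a
    simp only [List.toFinset_append, Finset.mem_union, List.mem_toFinset,
      List.mem_cons, List.mem_singleton, List.toFinset_cons]
    simp only [Finset.mem_insert, List.mem_toFinset]
    tauto
  · intro a b
    constructor
    · rintro ⟨hsub, hnadj⟩
      simp only [List.append_assoc, List.cons_append, List.singleton_append] at hsub ⊢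
      rcases pair_swap hsub with ⟨rfl, rfl⟩ | h'
      · exact absurd hadj hnadj
      · exact ⟨h', hnadj⟩
    · rintro ⟨hsub, hnadj⟩
      simp only [List.append_assoc, List.cons_append, List.singleton_append] at hsub ⊢
      rcases pair_swap hsub with ⟨rfl, rfl⟩ | h'
      · exact absurd hadj.symm hnadj
      · exact ⟨h', hnadj⟩

private lemma eqv_invariant [DecidableEq V] {u v : List V}
    (h : Relation.EqvGen (commStep G) u v) :
    u.toFinset = v.toFinset ∧
      ∀ x y : V, wordOrientation G u x y ↔ wordOrientation G v x y := by
  induction h with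
  | rel _ _ h => exact step_invariant h
  | refl => exact ⟨rfl, fun _ _ => Iff.rfl⟩
  | symm _ _ _ ih => exact ⟨ih.1.symm, fun x y => (ih.2 x y).symm⟩
  | trans _ _ _ _ _ ih₁ ih₂ =>
      exact ⟨ih₁.1.trans ih₂.1, fun x y => (ih₁.2 x y).trans (ih₂.2 x y)⟩

private lemma eqv_cons (a : V) {u v : List V}
    (h : Relation.EqvGen (commStep G) u v) :
    Relation.EqvGen (commStep G) (a :: u) (a :: v) := by
  induction h with
  | rel _ _ h =>
      obtain ⟨p, s, x, y, hadj, rfl, rfl⟩ := h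
      exact Relation.EqvGen.rel _ _ ⟨a :: p, s, x, y, hadj, rfl, rfl⟩
  | refl => exact Relation.EqvGen.refl _
  | symm _ _ _ ih => exact ih.symm _ _
  | trans _ _ _ _ _ ih₁ ih₂ => exact ih₁.trans _ _ _ ih₂

private lemma eqv_bubble (a : V) :
    ∀ (p : List V) (q : List V), (∀ b ∈ p, G.Adj b a) →
      Relation.EqvGen (commStep G) (p ++ a :: q) (a :: (p ++ q)) := by
  intro p
  induction p with
  | nil => intro q _; exact Relation.EqvGen.refl _
  | cons b p ih =>
      intro q hadj
      have h1 : Relation.EqvGen (commStep G) (b :: (p ++ a :: q))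
          (b :: a :: (p ++ q)) :=
        eqv_cons b (ih q (fun c hc => hadj c (List.mem_cons_of_mem _ hc)))
      have h2 : commStep G (b :: a :: (p ++ q)) (a :: b :: (p ++ q)) :=
        ⟨[], p ++ q, b, a, hadj b (List.mem_cons_self), rfl, rfl⟩
      exact h1.trans _ _ _ (Relation.EqvGen.rel _ _ h2)

private lemma orient_cons {a : V} {t : List V} (ha : a ∉ t) (x y : V) :
    wordOrientation G t x y ↔ (wordOrientation G (a :: t) x y ∧ x ≠ a) := by
  unfold wordOrientation
  constructor
  · rintro ⟨hsub, hnadj⟩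
    have hx : x ∈ t := hsub.subset (List.mem_cons_self)
    exact ⟨⟨hsub.cons a, hnadj⟩, fun h => ha (h ▸ hx)⟩
  · rintro ⟨⟨hsub, hnadj⟩, hxa⟩
    refine ⟨?_, hnadj⟩
    cases hsub with
    | cons _ h => exact h
    | cons_cons _ h => exact absurd rfl hxa

end Aux

/-- Word problem for the free partially commutative left regular band `B(Γ)`:
two duplicate-free words over `V` represent the same element of `B(Γ)` iff they
have the same set of letters and induce the same acyclic orientation of the
complement graph. In particular, two distinct generators commute iff they are
adjacent in `Γ`. -/
theorem free_partially_commutative_lrb_word_problem (V : Type*) [DecidableEq V]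
    [Fintype V] (G : SimpleGraph V) (v w : List V)
    (hv : v.Nodup) (hw : w.Nodup) :
    Relation.EqvGen (commStep G) v w ↔
      (v.toFinset = w.toFinset ∧
        ∀ x y : V, wordOrientation G v x y ↔ wordOrientation G w x y) := by
  constructor
  · exact eqv_invariant
  · rintro ⟨hset, horient⟩
    induction v generalizing w with
    | nil =>
        have : w = [] := (List.toFinset_eq_empty_iff w).mp (hset.symm.trans (by simp))
        subst this; exact Relation.EqvGen.refl _
    | cons a v ih =>
        -- `a ∈ w`; split `w = p ++ a :: q`
        have haw : a ∈ w := by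
          have : a ∈ w.toFinset := hset ▸ (by simp)
          simpa using this
        obtain ⟨p, q, rfl⟩ := List.append_of_mem haw
        have hap : a ∉ p := fun hp => by
          have := List.disjoint_of_nodup_append hw
          exact (this hp (List.mem_cons_self))
        have haq : a ∉ q :=
          (List.nodup_cons.mp (List.nodup_append.mp hw).2.1).1
        have hav : a ∉ v := (List.nodup_cons.mp hv).1
        have hv' : v.Nodup := (List.nodup_cons.mp hv).2
        have hpq : (p ++ q).Nodup :=
          (((List.Sublist.refl p).append (List.sublist_cons_self a q))).nodup hw
        have hapq : a ∉ p ++ q := by simp [hap, haq]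
        -- every letter of p is adjacent to a
        have hadjp : ∀ b ∈ p, G.Adj b a := by
          intro b hb
          by_contra hnadj
          have hba : b ≠ a := fun h => hap (h ▸ hb)
          have hsubw : [b, a].Sublist (p ++ a :: q) := by
            rw [List.sublist_append_iff]
            exact ⟨[b], [a], rfl, List.singleton_sublist.mpr hb, by simp⟩
          have : wordOrientation G (a :: v) b a := (horient b a).mpr ⟨hsubw, hnadj⟩
          obtain ⟨hsub, _⟩ := this
          cases hsub with
          | cons _ h => exact hav (h.subset (by simp))
          | cons_cons _ h => exact hav (by simpa using h.subset (by simp))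
        -- bubble `a` to the front of `w`
        have hbubble : Relation.EqvGen (commStep G) (p ++ a :: q) (a :: (p ++ q)) :=
          eqv_bubble a p q hadjp
        have hinv := eqv_invariant hbubble
        -- invariants relating `a :: v` and `a :: (p ++ q)`
        have hset' : (a :: v).toFinset = (a :: (p ++ q)).toFinset :=
          hset.trans hinv.1
        have horient' : ∀ x y, wordOrientation G (a :: v) x y ↔
            wordOrientation G (a :: (p ++ q)) x y :=
          fun x y => (horient x y).trans (hinv.2 x y)
        -- invariants for the tails
        have htset : v.toFinset = (p ++ q).toFinset := by
          ext x
          have hx := Finset.ext_iff.mp hset' x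
          simp only [List.toFinset_cons, Finset.mem_insert, List.mem_toFinset] at hx ⊢
          constructor
          · intro hxv
            have hxa : x ≠ a := fun h => hav (h ▸ hxv)
            rcases hx.mp (Or.inr hxv) with h | h
            · exact absurd h hxa
            · exact h
          · intro hxpq
            have hxa : x ≠ a := fun h => hapq (h ▸ hxpq)
            rcases hx.mpr (Or.inr hxpq) with h | h
            · exact absurd h hxa
            · exact h
        have htorient : ∀ x y, wordOrientation G v x y ↔
            wordOrientation G (p ++ q) x y := by
          intro x y
          rw [orient_cons hav x y, orient_cons hapq x y, horient' x y]
        have := ih (p ++ q) hv' hpq htset htorient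
        exact ((eqv_cons a this).trans _ _ _ (hbubble.symm _ _))
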